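/- Let w : ℝ³ → ℝ^{3×3} be a matrix field all of whose entries are differentiable at a point x ∈ ℝ³. Define pointwise Ξw = wᵀ − tr(w)·I, the row-wise divergence of a matrix field M by (∇·M)ᵢ = Σⱼ ∂ⱼ Mᵢⱼ, the row-wise curl of M as the matrix whose i-th row is (∂₂Mᵢ₃ − ∂₃Mᵢ₂, ∂₃Mᵢ₁ − ∂₁Mᵢ₃, ∂₁Mᵢ₂ − ∂₂Mᵢ₁), and Skew(M) := (M₃₂ − M₂₃, M₁₃ − M₃₁, M₂₁ − M₁₂) ∈ ℝ³. Then (∇·(Ξw))(x) = Skew((∇×w)(x)). -/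

import Mathlib

open Matrix

/-- Partial derivative of a scalar function on `ℝ³` in the `j`-th coordinate direction. -/
noncomputable def pd3 (f : (Fin 3 → ℝ) → ℝ) (j : Fin 3) (x : Fin 3 → ℝ) : ℝ :=
  fderiv ℝ f x (Pi.single j 1)

/-- `Ξ M = Mᵀ − tr(M)·I` for a 3×3 matrix. -/
def Xi3 (M : Matrix (Fin 3) (Fin 3) ℝ) : Matrix (Fin 3) (Fin 3) ℝ :=
  Mᵀ - Matrix.trace M • (1 : Matrix (Fin 3) (Fin 3) ℝ)

/-- Row-wise divergence of a matrix field: `(∇·M)ᵢ = Σⱼ ∂ⱼ Mᵢⱼ`. -/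
noncomputable def mdiv3 (M : (Fin 3 → ℝ) → Matrix (Fin 3) (Fin 3) ℝ)
    (x : Fin 3 → ℝ) : Fin 3 → ℝ :=
  fun i => ∑ j : Fin 3, pd3 (fun y => M y i j) j x

/-- Row-wise curl of a matrix field: the `i`-th row is
`(∂₂Mᵢ₃ − ∂₃Mᵢ₂, ∂₃Mᵢ₁ − ∂₁Mᵢ₃, ∂₁Mᵢ₂ − ∂₂Mᵢ₁)`. -/
noncomputable def mcurl3 (M : (Fin 3 → ℝ) → Matrix (Fin 3) (Fin 3) ℝ)
    (x : Fin 3 → ℝ) : Matrix (Fin 3) (Fin 3) ℝ :=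
  Matrix.of fun i =>
    ![pd3 (fun y => M y i 2) 1 x - pd3 (fun y => M y i 1) 2 x,
      pd3 (fun y => M y i 0) 2 x - pd3 (fun y => M y i 2) 0 x,
      pd3 (fun y => M y i 1) 0 x - pd3 (fun y => M y i 0) 1 x]

/-- `Skew(M) = (M₃₂ − M₂₃, M₁₃ − M₃₁, M₂₁ − M₁₂) ∈ ℝ³`. -/
def skew3 (M : Matrix (Fin 3) (Fin 3) ℝ) : Fin 3 → ℝ :=
  ![M 2 1 - M 1 2, M 0 2 - M 2 0, M 1 0 - M 0 1]

/-- 3D commutativity relation of the coupled de Rham complexes for linear elasticity: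
`∇·(Ξ w) = Skew(∇×w)` at every point where all entries of `w` are differentiable. -/

lemma pd3_entry (w : (Fin 3 → ℝ) → Matrix (Fin 3) (Fin 3) ℝ)
    (x : Fin 3 → ℝ)
    (hw : ∀ i k : Fin 3, DifferentiableAt ℝ (fun y => w y i k) x)
    (i j : Fin 3) :
    pd3 (fun y => Xi3 (w y) i j) j x =
      pd3 (fun y => w y j i) j x -
        (pd3 (fun y => w y 0 0) j x + pd3 (fun y => w y 1 1) j x +
          pd3 (fun y => w y 2 2) j x) * (if i = j then (1:ℝ) else 0) := by
  have h : (fun y => Xi3 (w y) i j) =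
      fun y => w y j i - (w y 0 0 + w y 1 1 + w y 2 2) * (if i = j then (1:ℝ) else 0) := by
    funext y
    simp [Xi3, Matrix.trace, Matrix.diag, Fin.sum_univ_three, Matrix.one_apply,
      Matrix.smul_apply, smul_eq_mul]
  rw [h]
  by_cases hij : i = j
  · subst hij
    simp only [if_true, mul_one, pd3]
    rw [fderiv_fun_sub (hw i i) (((hw 0 0).fun_add (hw 1 1)).fun_add (hw 2 2)),
      fderiv_fun_add ((hw 0 0).fun_add (hw 1 1)) (hw 2 2), fderiv_fun_add (hw 0 0) (hw 1 1)]
    simp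
  · simp only [hij, if_false, mul_zero, sub_zero]

theorem div_Xi_eq_skew_curl (w : (Fin 3 → ℝ) → Matrix (Fin 3) (Fin 3) ℝ)
    (x : Fin 3 → ℝ)
    (hw : ∀ i k : Fin 3, DifferentiableAt ℝ (fun y => w y i k) x) :
    mdiv3 (fun y => Xi3 (w y)) x = skew3 (mcurl3 w x) := by
  funext i
  fin_cases i <;>
  · simp only [mdiv3, Fin.sum_univ_three, pd3_entry w x hw, skew3, mcurl3,
      Matrix.of_apply, Matrix.cons_val', Matrix.cons_val_zero, Matrix.cons_val_one,
      Matrix.head_cons, Matrix.cons_val_two, Matrix.tail_cons, Fin.mk_zero, Fin.mk_one, Fin.isValue,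
      show (⟨2, by norm_num⟩ : Fin 3) = 2 from rfl]
    norm_num [Fin.ext_iff]
    ring
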